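/- Let ρ0 and ρ1 be quantum states on ℂ^d with full support, and let S be a sequential quantum probability ratio test (SQPRT) with parameters A > 0 and B > 0 whose stopping time T satisfies P_0(T < ∞) = P_1(T < ∞) = 1. Then the error probabilities satisfy α = P_0(S_T ≤ −A) ≤ e^{−A} and β = P_1(S_T ≥ B) ≤ e^{−B}. -/

import Mathlib

open MeasureTheory ProbabilityTheory Filter
open scoped ENNReal NNReal Topology ComplexOrder

namespace SQHT

/-- `d × d` complex matrices over an index type `ι`. -/
abbrev Mat (ι : Type) := Matrix ι ι ℂ

noncomputable instance (ι : Type) : MeasurableSpace (Mat ι) :=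
  inferInstanceAs (MeasurableSpace (ι → ι → ℂ))

variable {ι : Type} [Fintype ι] [DecidableEq ι]

/-- A quantum state: positive semidefinite with unit trace. -/
def IsState (ρ : Mat ι) : Prop := ρ.PosSemidef ∧ ρ.trace = 1

/-- A POVM with finite outcome set `Fin N`. -/
def IsPOVM {N : ℕ} (m : Fin N → Mat ι) : Prop :=
  (∀ x, (m x).PosSemidef) ∧ ∑ x, m x = 1

/-- The (compact) space of POVMs on `ℂ^ι` with outcome set `Fin N`. -/
abbrev POVM (ι : Type) [Fintype ι] [DecidableEq ι] (N : ℕ) :=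
  {m : Fin N → Mat ι // IsPOVM m}

/-- Born probability of outcome `x` when measuring `m` on state `ρ`. -/
noncomputable def outProb (ρ : Mat ι) {X : Type*} (m : X → Mat ι) (x : X) : ℝ :=
  ((ρ * m x).trace).re

/-- Classical relative entropy (KL divergence) of two pmfs on a finite set,
with the convention `0 log 0 = 0`. -/
noncomputable def KL {X : Type*} [Fintype X] (P Q : X → ℝ) : ℝ :=
  ∑ x, if P x = 0 then 0 else P x * Real.log (P x / Q x)

/-- A rank-one projective measurement with `|ι|` outcomes. -/
def IsRankOnePVM (m : ι → Mat ι) : Prop :=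
  (∀ x, (m x).PosSemidef) ∧ ∑ x, m x = 1 ∧ (∀ x, m x * m x = m x) ∧ ∀ x, (m x).rank = 1

/-- The measured relative entropy `D_M(ρ0‖ρ1)`: supremum of classical relative
entropies over rank-one PVMs with `|ι|` outcomes. -/
noncomputable def Dmeas (ρ0 ρ1 : Mat ι) : ℝ :=
  ⨆ m : {m : ι → Mat ι // IsRankOnePVM m}, KL (outProb ρ0 m.1) (outProb ρ1 m.1)

/-- Histories of `k` (measurement, outcome) pairs. -/
abbrev Hist (ι : Type) [Fintype ι] [DecidableEq ι] (N k : ℕ) := Fin k → POVM ι N × Fin N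

/-- Infinite trajectories of (measurement, outcome) pairs. -/
abbrev Traj (ι : Type) [Fintype ι] [DecidableEq ι] (N : ℕ) := ℕ → POVM ι N × Fin N

/-- A sequential quantum hypothesis test: a finite outcome set `Fin N`,
adaptive measurement strategies given by kernels from histories to POVMs,
and decision functions. `dec k` is the decision after `k+1` observations:
`none` means continue (`*`), `some false` accepts hypothesis 0, `some true` accepts 1. -/
structure SQHTtest (ι : Type) [Fintype ι] [DecidableEq ι] where
  N : ℕ
  μ : (k : ℕ) → Kernel (Hist ι N k) (POVM ι N)
  markov : ∀ k, IsMarkovKernel (μ k)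
  dec : (k : ℕ) → Hist ι N (k + 1) → Option Bool
  dec_meas : ∀ k o, MeasurableSet {h : Hist ι N (k + 1) | dec k h = o}

/-- The law of the outcome of measuring POVM `m` on state `ρ` (Born's rule). -/
noncomputable def outMeasure (ρ : Mat ι) {N : ℕ} (m : POVM ι N) : Measure (Fin N) :=
  ∑ x, (ENNReal.ofReal (outProb ρ m.1 x)) • Measure.dirac x

/-- The joint law of the first `k` (measurement, outcome) pairs when the
underlying state is `ρ`: `P[(A × x_1^k) × ⋯] = ∫_A ∏_j μ_j(dm_j|⋯) Tr[ρ m_j(x_j)]`. -/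
noncomputable def stepLaw (ρ : Mat ι) {N : ℕ}
    (μ : (k : ℕ) → Kernel (Hist ι N k) (POVM ι N)) :
    (k : ℕ) → Measure (Hist ι N k)
  | 0 => Measure.dirac (fun i => i.elim0)
  | (k + 1) => (stepLaw ρ μ k).bind fun h =>
      ((μ k) h).bind fun m => (outMeasure ρ m).map (fun x => Fin.snoc h (m, x))

/-- Restriction of a trajectory to its first `k` steps. -/
def pref {N : ℕ} (k : ℕ) (ω : Traj ι N) : Hist ι N k := fun i => ω i

/-- `P` is the law of the trajectory process of test `S` on state `ρ`. -/
def IsLaw (ρ : Mat ι) (S : SQHTtest ι) (P : Measure (Traj ι S.N)) : Prop :=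
  IsProbabilityMeasure P ∧ ∀ k, P.map (pref k) = stepLaw ρ S.μ k

/-- The test stops for the first time after `k+1` observations, declaring `b`. -/
def decidesAt (S : SQHTtest ι) (ω : Traj ι S.N) (k : ℕ) (b : Bool) : Prop :=
  (∀ j, j < k → S.dec j (pref (j + 1) ω) = none) ∧ S.dec k (pref (k + 1) ω) = some b

/-- Error of the first kind: probability (under `ρ0`) of declaring hypothesis 1. -/
noncomputable def errA (S : SQHTtest ι) (P0 : Measure (Traj ι S.N)) : ℝ≥0∞ :=
  P0 {ω | ∃ k, decidesAt S ω k true}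

/-- Error of the second kind: probability (under `ρ1`) of declaring hypothesis 0. -/
noncomputable def errB (S : SQHTtest ι) (P1 : Measure (Traj ι S.N)) : ℝ≥0∞ :=
  P1 {ω | ∃ k, decidesAt S ω k false}

/-- The stopping time `T` (number of samples used), as an extended real so that
`T = ∞` when the test never stops. `dec k` is the decision after `k+1` samples. -/
noncomputable def stopTime (S : SQHTtest ι) (ω : Traj ι S.N) : ℝ≥0∞ :=
  sInf {n : ℝ≥0∞ | ∃ k : ℕ, n = (k : ℝ≥0∞) + 1 ∧ S.dec k (pref (k + 1) ω) ≠ none}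

/-- Expected number of samples. -/
noncomputable def expT (S : SQHTtest ι) (P : Measure (Traj ι S.N)) : ℝ≥0∞ :=
  ∫⁻ ω, stopTime S ω ∂P

/-- Logarithm on `ℝ≥0∞` with values in `EReal` (`log 0 = ⊥`, `log ∞ = ⊤`). -/
noncomputable def elog (x : ℝ≥0∞) : EReal :=
  if x = 0 then ⊥ else if x = ∞ then ⊤ else ((Real.log x.toReal : ℝ) : EReal)

/-- `(R0, R1)` is an achievable error-exponent pair under the expectation
constraint, for discriminating `ρ0` from `ρ1`, with exponents normalized by
`n * l` (`l` is the block length; `l = 1` for single-copy tests). -/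
def AchievableE (ρ0 ρ1 : Mat ι) (l : ℕ) (R : ℝ × ℝ) : Prop :=
  0 ≤ R.1 ∧ 0 ≤ R.2 ∧
  ∃ (S : ℕ → SQHTtest ι) (P0 P1 : (n : ℕ) → Measure (Traj ι (S n).N)),
    (∀ n, IsLaw ρ0 (S n) (P0 n)) ∧ (∀ n, IsLaw ρ1 (S n) (P1 n)) ∧
    (R.1 : EReal) ≤ atTop.liminf
      (fun n : ℕ => ((((n * l : ℕ) : ℝ)⁻¹ : ℝ) : EReal) * (- elog (errA (S n) (P0 n)))) ∧
    (R.2 : EReal) ≤ atTop.liminf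
      (fun n : ℕ => ((((n * l : ℕ) : ℝ)⁻¹ : ℝ) : EReal) * (- elog (errB (S n) (P1 n)))) ∧
    atTop.limsup (fun n : ℕ =>
      (max (expT (S n) (P0 n)) (expT (S n) (P1 n)) : ℝ≥0∞).toEReal - (((n : ℝ)) : EReal)) ≤ 0

/-- `(R0, R1)` is an `ε`-achievable error-exponent pair under the probabilistic
constraint. -/
def AchievableP (ρ0 ρ1 : Mat ι) (l : ℕ) (ε : ℝ) (R : ℝ × ℝ) : Prop :=
  0 ≤ R.1 ∧ 0 ≤ R.2 ∧
  ∃ (S : ℕ → SQHTtest ι) (P0 P1 : (n : ℕ) → Measure (Traj ι (S n).N)),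
    (∀ n, IsLaw ρ0 (S n) (P0 n)) ∧ (∀ n, IsLaw ρ1 (S n) (P1 n)) ∧
    (R.1 : EReal) ≤ atTop.liminf
      (fun n : ℕ => ((((n * l : ℕ) : ℝ)⁻¹ : ℝ) : EReal) * (- elog (errA (S n) (P0 n)))) ∧
    (R.2 : EReal) ≤ atTop.liminf
      (fun n : ℕ => ((((n * l : ℕ) : ℝ)⁻¹ : ℝ) : EReal) * (- elog (errB (S n) (P1 n)))) ∧
    atTop.limsup (fun n : ℕ =>
      max ((P0 n) {ω | (n : ℝ≥0∞) < stopTime (S n) ω})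
          ((P1 n) {ω | (n : ℝ≥0∞) < stopTime (S n) ω})) < ENNReal.ofReal ε

end SQHT

namespace SQHT

variable {ι : Type} [Fintype ι] [DecidableEq ι]

/-- Log-likelihood ratio of a single (measurement, outcome) pair. -/
noncomputable def Zfun (ρ0 ρ1 : Mat ι) {N : ℕ} (p : POVM ι N × Fin N) : ℝ :=
  Real.log (outProb ρ0 p.1.1 p.2) - Real.log (outProb ρ1 p.1.1 p.2)

/-- Accumulated log-likelihood ratio `S_k = ∑_{j=1}^k Z_j`. -/
noncomputable def Sfun (ρ0 ρ1 : Mat ι) {N : ℕ} (k : ℕ) (ω : Traj ι N) : ℝ :=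
  ∑ j ∈ Finset.range k, Zfun ρ0 ρ1 (ω j)

/-- The natural filtration `F_k = σ(M_1^k, X_1^k)` of the trajectory process. -/
noncomputable def trajFiltration (ι : Type) [Fintype ι] [DecidableEq ι] (N : ℕ) :
    Filtration ℕ (inferInstance : MeasurableSpace (Traj ι N)) where
  seq k := MeasurableSpace.comap (pref (ι := ι) (N := N) k) inferInstance
  mono' := by
    intro i j hij
    have hcomp : pref (ι := ι) (N := N) i =
        (fun h : Hist ι N j => fun t : Fin i => h (Fin.castLE hij t)) ∘
          pref (ι := ι) (N := N) j := rfl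
    show MeasurableSpace.comap (pref (ι := ι) (N := N) i) inferInstance ≤
      MeasurableSpace.comap (pref (ι := ι) (N := N) j) inferInstance
    rw [hcomp, ← MeasurableSpace.comap_comp]
    exact MeasurableSpace.comap_mono
      ((measurable_pi_lambda _ fun t => measurable_pi_apply _).comap_le)
  le' := fun k => (measurable_pi_lambda _ fun i => measurable_pi_apply _).comap_le

end SQHT

namespace SQHT

variable {ι : Type} [Fintype ι] [DecidableEq ι]

/-- An SQHT is a sequential quantum probability ratio test (SQPRT) with parameters
`A, B > 0` if it stops and accepts hypothesis 0 as soon as `S_k ≥ B`, stops and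
accepts hypothesis 1 as soon as `S_k ≤ −A`, and continues otherwise. -/
def IsSQPRT (ρ0 ρ1 : Mat ι) (S : SQHTtest ι) (A B : ℝ) : Prop :=
  ∀ (k : ℕ) (h : Hist ι S.N (k + 1)),
    S.dec k h =
      if B ≤ ∑ i, Zfun ρ0 ρ1 (h i) then some false
      else if (∑ i, Zfun ρ0 ρ1 (h i)) ≤ -A then some true
      else none


section Aux

open Matrix

variable {ι : Type} [Fintype ι] [DecidableEq ι]

lemma diag_form (ρ N : Mat ι) (hN : N.IsHermitian) (i : ι) :
    (N * ρ * N) i i = star (fun j => N j i) ⬝ᵥ ρ.mulVec (fun j => N j i) := by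
  simp only [Matrix.mul_apply, Matrix.mulVec, dotProduct, Pi.star_apply,
    Finset.mul_sum, Finset.sum_mul]
  rw [Finset.sum_comm]
  refine Finset.sum_congr rfl fun j _ => Finset.sum_congr rfl fun l _ => ?_
  have : star (N j i) = N i j := by rw [← hN.apply]; simp
  rw [this]; ring

open scoped MatrixOrder in
lemma exists_herm_sqrt (M : Mat ι) (hM : M.PosSemidef) :
    ∃ R : Mat ι, R.IsHermitian ∧ R * R = M :=
  ⟨CFC.sqrt M, (CFC.sqrt_nonneg M).posSemidef.1, CFC.sqrt_mul_sqrt_self M hM.nonneg⟩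

lemma trace_mul_nonneg' (ρ M : Mat ι) (hρ : ρ.PosSemidef) (hM : M.PosSemidef) :
    0 ≤ (ρ * M).trace := by
  obtain ⟨R, hRh, hRR⟩ := exists_herm_sqrt M hM
  have key : (ρ * M).trace = (R * ρ * R).trace := by
    conv_lhs => rw [← hRR]
    rw [← Matrix.mul_assoc, Matrix.trace_mul_cycle]
  rw [key, Matrix.trace]
  refine Finset.sum_nonneg fun i _ => ?_
  rw [Matrix.diag_apply, diag_form ρ R hRh i]
  exact hρ.dotProduct_mulVec_nonneg _

lemma eq_zero_of_trace_mul_eq_zero (ρ M : Mat ι) (hρ : ρ.PosDef) (hM : M.PosSemidef)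
    (h : (ρ * M).trace = 0) : M = 0 := by
  obtain ⟨R, hRh, hRR⟩ := exists_herm_sqrt M hM
  have key : (ρ * M).trace = (R * ρ * R).trace := by
    conv_lhs => rw [← hRR]
    rw [← Matrix.mul_assoc, Matrix.trace_mul_cycle]
  rw [key, Matrix.trace] at h
  have hz : ∀ i ∈ Finset.univ, (R * ρ * R).diag i = 0 := by
    refine (Finset.sum_eq_zero_iff_of_nonneg fun i _ => ?_).mp h
    rw [Matrix.diag_apply, diag_form ρ R hRh i]
    exact hρ.posSemidef.dotProduct_mulVec_nonneg _
  have hNz : R = 0 := by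
    ext j i
    by_contra hne
    have hv : (fun j => R j i) ≠ 0 := fun hv0 => hne (by simpa using congrFun hv0 j)
    have hlt := hρ.dotProduct_mulVec_pos hv
    have h0 := hz i (Finset.mem_univ i)
    rw [Matrix.diag_apply, diag_form ρ R hRh i] at h0
    rw [h0] at hlt
    exact lt_irrefl _ hlt
  rw [← hRR, hNz, Matrix.zero_mul]

lemma outProb_nonneg (ρ : Mat ι) (hρ : ρ.PosSemidef) {N : ℕ} (m : POVM ι N) (x : Fin N) :
    0 ≤ outProb ρ m.1 x := by
  have := trace_mul_nonneg' ρ (m.1 x) hρ (m.2.1 x)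
  rw [Complex.le_def] at this
  simpa [outProb] using this.1

lemma outProb_eq_zero_iff (ρ : Mat ι) (hρ : ρ.PosDef) {N : ℕ} (m : POVM ι N) (x : Fin N) :
    outProb ρ m.1 x = 0 ↔ m.1 x = 0 := by
  constructor
  · intro h
    refine eq_zero_of_trace_mul_eq_zero ρ (m.1 x) hρ (m.2.1 x) ?_
    have hnn := trace_mul_nonneg' ρ (m.1 x) hρ.posSemidef (m.2.1 x)
    rw [Complex.le_def] at hnn
    apply Complex.ext
    · simpa [outProb] using h
    · simpa using hnn.2.symm
  · intro h; simp [outProb, h]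

lemma outProb_factor (ρ0 ρ1 : Mat ι) (h0 : ρ0.PosDef) (h1 : ρ1.PosDef) {N : ℕ}
    (m : POVM ι N) (x : Fin N) :
    outProb ρ0 m.1 x = Real.exp (Zfun ρ0 ρ1 (m, x)) * outProb ρ1 m.1 x := by
  by_cases hz : m.1 x = 0
  · simp [outProb, hz]
  · have hp0 : 0 < outProb ρ0 m.1 x :=
      lt_of_le_of_ne (outProb_nonneg ρ0 h0.posSemidef m x)
        (fun h => hz ((outProb_eq_zero_iff ρ0 h0 m x).mp h.symm))
    have hp1 : 0 < outProb ρ1 m.1 x :=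
      lt_of_le_of_ne (outProb_nonneg ρ1 h1.posSemidef m x)
        (fun h => hz ((outProb_eq_zero_iff ρ1 h1 m x).mp h.symm))
    rw [Zfun, Real.exp_sub, Real.exp_log hp0, Real.exp_log hp1]
    field_simp

lemma measurable_outProb (ρ : Mat ι) {N : ℕ} (x : Fin N) :
    Measurable fun m : POVM ι N => outProb ρ m.1 x := by
  have heq : ∀ m : POVM ι N, outProb ρ m.1 x = ∑ i, ∑ j, (ρ i j * m.1 x j i).re := by
    intro m
    simp only [outProb, Matrix.trace, Matrix.diag_apply, Matrix.mul_apply]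
    rw [Complex.re_sum]
    exact Finset.sum_congr rfl fun i _ => by rw [Complex.re_sum]
  simp_rw [heq]
  refine Finset.measurable_sum _ fun i _ => Finset.measurable_sum _ fun j _ => ?_
  exact Complex.measurable_re.comp
    ((measurable_const.mul (((measurable_pi_apply i).comp ((measurable_pi_apply j).comp
      ((measurable_pi_apply x).comp measurable_subtype_coe))))))

lemma measurable_Zfun (ρ0 ρ1 : Mat ι) {N : ℕ} :
    Measurable (Zfun ρ0 ρ1 : POVM ι N × Fin N → ℝ) := by
  refine measurable_from_prod_countable_left fun x => ?_
  exact (Real.measurable_log.comp (measurable_outProb ρ0 x)).sub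
    (Real.measurable_log.comp (measurable_outProb ρ1 x))

lemma measurable_sumZ (ρ0 ρ1 : Mat ι) {N k : ℕ} :
    Measurable fun h : Hist ι N k => ∑ i, Zfun ρ0 ρ1 (h i) :=
  Finset.measurable_sum _ fun i _ => (measurable_Zfun ρ0 ρ1).comp (measurable_pi_apply i)

lemma measurable_snocfun {N k : ℕ} (x : Fin N) :
    Measurable fun p : Hist ι N k × POVM ι N => (Fin.snoc p.1 (p.2, x) : Hist ι N (k+1)) := by
  refine measurable_pi_lambda _ fun i => ?_
  induction i using Fin.lastCases with
  | last =>
      simp only [Fin.snoc_last]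
      exact measurable_snd.prodMk measurable_const
  | cast j =>
      simp only [Fin.snoc_castSucc]
      exact (measurable_pi_apply j).comp measurable_fst

end Aux

section Aux2

variable {ι : Type} [Fintype ι] [DecidableEq ι]

lemma outMeasure_apply (ρ : Mat ι) {N : ℕ} (m : POVM ι N) (s : Set (Fin N)) :
    outMeasure ρ m s = ∑ x, ENNReal.ofReal (outProb ρ m.1 x) * s.indicator 1 x := by
  rw [outMeasure, Measure.finset_sum_apply]
  exact Finset.sum_congr rfl fun x _ => by
    rw [Measure.smul_apply, Measure.dirac_apply, smul_eq_mul]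

lemma lintegral_outMeasure (ρ : Mat ι) {N : ℕ} (m : POVM ι N) (f : Fin N → ℝ≥0∞) :
    ∫⁻ x, f x ∂(outMeasure ρ m) = ∑ x, ENNReal.ofReal (outProb ρ m.1 x) * f x := by
  rw [outMeasure, lintegral_finset_sum_measure]
  exact Finset.sum_congr rfl fun x _ => by
    rw [lintegral_smul_measure, lintegral_dirac, smul_eq_mul]

lemma inner_apply (ρ : Mat ι) {N k : ℕ} (h : Hist ι N k) (m : POVM ι N)
    {s : Set (Hist ι N (k+1))} (hs : MeasurableSet s) :
    ((outMeasure ρ m).map (fun x => Fin.snoc h (m, x))) s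
      = ∑ x, ENNReal.ofReal (outProb ρ m.1 x) * s.indicator 1 (Fin.snoc h (m, x)) := by
  rw [Measure.map_apply (measurable_of_countable _) hs, outMeasure_apply]
  refine Finset.sum_congr rfl fun x _ => ?_
  classical
  rw [Set.indicator_apply, Set.indicator_apply, Set.mem_preimage]
  simp

lemma measurable_inner_coe (ρ : Mat ι) {N k : ℕ} {s : Set (Hist ι N (k+1))}
    (hs : MeasurableSet s) :
    Measurable fun p : Hist ι N k × POVM ι N =>
      ((outMeasure ρ p.2).map (fun x => Fin.snoc p.1 (p.2, x))) s := by
  have heq : (fun p : Hist ι N k × POVM ι N =>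
      ((outMeasure ρ p.2).map (fun x => Fin.snoc p.1 (p.2, x))) s)
      = fun p => ∑ x, ENNReal.ofReal (outProb ρ p.2.1 x) * s.indicator 1 (Fin.snoc p.1 (p.2, x)) :=
    funext fun p => inner_apply ρ p.1 p.2 hs
  rw [heq]
  refine Finset.measurable_sum _ fun x _ => Measurable.mul ?_ ?_
  · exact ((measurable_outProb ρ x).comp measurable_snd).ennreal_ofReal
  · exact ((measurable_one.indicator hs)).comp (measurable_snocfun x)

lemma measurable_inner (ρ : Mat ι) {N k : ℕ} (h : Hist ι N k) :
    Measurable fun m : POVM ι N =>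
      (outMeasure ρ m).map (fun x => (Fin.snoc h (m, x) : Hist ι N (k+1))) :=
  Measure.measurable_of_measurable_coe _ fun _s hs =>
    (measurable_inner_coe ρ hs).comp (measurable_const.prodMk measurable_id)

lemma measurable_outer (ρ : Mat ι) {N : ℕ} (μ : (k : ℕ) → Kernel (Hist ι N k) (POVM ι N))
    (hμ : ∀ k, IsMarkovKernel (μ k)) (k : ℕ) :
    Measurable fun h : Hist ι N k =>
      ((μ k) h).bind (fun m => (outMeasure ρ m).map (fun x => (Fin.snoc h (m, x) : Hist ι N (k+1)))) := by
  haveI := hμ k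
  refine Measure.measurable_of_measurable_coe _ fun s hs => ?_
  have heq : ∀ h : Hist ι N k,
      (((μ k) h).bind (fun m => (outMeasure ρ m).map (fun x => Fin.snoc h (m, x)))) s
        = ∫⁻ m, ((outMeasure ρ m).map (fun x => Fin.snoc h (m, x))) s ∂((μ k) h) :=
    fun h => Measure.bind_apply hs (measurable_inner ρ h).aemeasurable
  simp_rw [heq]
  exact Measurable.lintegral_kernel_prod_right (measurable_inner_coe ρ hs)

lemma lintegral_stepLaw_succ (ρ : Mat ι) {N : ℕ}
    (μ : (k : ℕ) → Kernel (Hist ι N k) (POVM ι N)) (hμ : ∀ k, IsMarkovKernel (μ k))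
    (k : ℕ) {F : Hist ι N (k+1) → ℝ≥0∞} (hF : Measurable F) :
    ∫⁻ h', F h' ∂(stepLaw ρ μ (k+1))
      = ∫⁻ h, ∫⁻ m, ∑ x, ENNReal.ofReal (outProb ρ m.1 x) * F (Fin.snoc h (m, x))
          ∂((μ k) h) ∂(stepLaw ρ μ k) := by
  rw [stepLaw, Measure.lintegral_bind (measurable_outer ρ μ hμ k).aemeasurable hF.aemeasurable]
  refine lintegral_congr fun h => ?_
  rw [Measure.lintegral_bind (measurable_inner ρ h).aemeasurable hF.aemeasurable]
  refine lintegral_congr fun m => ?_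
  rw [lintegral_map hF (measurable_of_countable _), lintegral_outMeasure]

end Aux2

section Aux3

variable {ι : Type} [Fintype ι] [DecidableEq ι]

/-- Likelihood-ratio density of `stepLaw ρ0` w.r.t. `stepLaw ρ1`. -/
noncomputable def densFn (ρ0 ρ1 : Mat ι) (N k : ℕ) : Hist ι N k → ℝ≥0∞ :=
  fun h => ENNReal.ofReal (Real.exp (∑ i, Zfun ρ0 ρ1 (h i)))

lemma measurable_densFn (ρ0 ρ1 : Mat ι) (N k : ℕ) : Measurable (densFn ρ0 ρ1 N k) :=
  (Real.measurable_exp.comp (measurable_sumZ ρ0 ρ1)).ennreal_ofReal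

lemma densFn_snoc (ρ0 ρ1 : Mat ι) {N k : ℕ} (h : Hist ι N k) (p : POVM ι N × Fin N) :
    densFn ρ0 ρ1 N (k+1) (Fin.snoc h p)
      = densFn ρ0 ρ1 N k h * ENNReal.ofReal (Real.exp (Zfun ρ0 ρ1 p)) := by
  unfold densFn
  rw [Fin.sum_univ_castSucc]
  simp only [Fin.snoc_castSucc, Fin.snoc_last]
  rw [Real.exp_add, ENNReal.ofReal_mul (Real.exp_nonneg _)]

lemma measurable_Phi (ρ : Mat ι) {N : ℕ} (μ : (k : ℕ) → Kernel (Hist ι N k) (POVM ι N))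
    (hμ : ∀ k, IsMarkovKernel (μ k)) (k : ℕ) {F : Hist ι N (k+1) → ℝ≥0∞}
    (hF : Measurable F) :
    Measurable fun h : Hist ι N k =>
      ∫⁻ m, ∑ x, ENNReal.ofReal (outProb ρ m.1 x) * F (Fin.snoc h (m, x)) ∂((μ k) h) := by
  haveI := hμ k
  refine Measurable.lintegral_kernel_prod_right ?_
  refine Finset.measurable_sum _ fun x _ => Measurable.mul ?_ ?_
  · exact ((measurable_outProb ρ x).comp measurable_snd).ennreal_ofReal
  · exact hF.comp (measurable_snocfun x)

lemma stepLaw_withDensity (ρ0 ρ1 : Mat ι) (hfs0 : ρ0.PosDef) (hfs1 : ρ1.PosDef) {N : ℕ}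
    (μ : (k : ℕ) → Kernel (Hist ι N k) (POVM ι N)) (hμ : ∀ k, IsMarkovKernel (μ k)) (k : ℕ) :
    stepLaw ρ0 μ k = (stepLaw ρ1 μ k).withDensity (densFn ρ0 ρ1 N k) := by
  induction k with
  | zero =>
      have hg : densFn ρ0 ρ1 N 0 = 1 := funext fun h => by simp [densFn]
      rw [hg, withDensity_one]
      rfl
  | succ k ih =>
      ext s hs
      have hind : Measurable (s.indicator (1 : Hist ι N (k+1) → ℝ≥0∞)) :=
        measurable_one.indicator hs
      have hgind : Measurable fun h' => densFn ρ0 ρ1 N (k+1) h' * s.indicator 1 h' :=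
        (measurable_densFn ρ0 ρ1 N (k+1)).mul hind
      calc stepLaw ρ0 μ (k+1) s
          = ∫⁻ h', s.indicator 1 h' ∂(stepLaw ρ0 μ (k+1)) := (lintegral_indicator_one hs).symm
        _ = ∫⁻ h, ∫⁻ m, ∑ x, ENNReal.ofReal (outProb ρ0 m.1 x)
              * s.indicator 1 (Fin.snoc h (m, x)) ∂((μ k) h) ∂(stepLaw ρ0 μ k) :=
            lintegral_stepLaw_succ ρ0 μ hμ k hind
        _ = ∫⁻ h, densFn ρ0 ρ1 N k h * ∫⁻ m, ∑ x, ENNReal.ofReal (outProb ρ0 m.1 x)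
              * s.indicator 1 (Fin.snoc h (m, x)) ∂((μ k) h) ∂(stepLaw ρ1 μ k) := by
            rw [ih, lintegral_withDensity_eq_lintegral_mul _ (measurable_densFn ρ0 ρ1 N k)
              (measurable_Phi ρ0 μ hμ k hind)]
            rfl
        _ = ∫⁻ h, ∫⁻ m, ∑ x, ENNReal.ofReal (outProb ρ1 m.1 x)
              * (densFn ρ0 ρ1 N (k+1) (Fin.snoc h (m, x))
                  * s.indicator 1 (Fin.snoc h (m, x))) ∂((μ k) h) ∂(stepLaw ρ1 μ k) := by
            refine lintegral_congr fun h => ?_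
            haveI := hμ k
            rw [← lintegral_const_mul _ ?hmeas]
            case hmeas =>
              refine Finset.measurable_sum _ fun x _ => Measurable.mul ?_ ?_
              · exact (measurable_outProb ρ0 x).ennreal_ofReal
              · exact hind.comp ((measurable_snocfun x).comp
                  (measurable_const.prodMk measurable_id))
            refine lintegral_congr fun m => ?_
            rw [Finset.mul_sum]
            refine Finset.sum_congr rfl fun x _ => ?_
            rw [outProb_factor ρ0 ρ1 hfs0 hfs1 m x,
              ENNReal.ofReal_mul (Real.exp_nonneg _), densFn_snoc]
            ring
        _ = ∫⁻ h', densFn ρ0 ρ1 N (k+1) h' * s.indicator 1 h' ∂(stepLaw ρ1 μ (k+1)) :=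
            (lintegral_stepLaw_succ ρ1 μ hμ k hgind).symm
        _ = ((stepLaw ρ1 μ (k+1)).withDensity (densFn ρ0 ρ1 N (k+1))) s := by
            rw [withDensity_apply _ hs, ← lintegral_indicator hs]
            refine lintegral_congr fun h' => ?_
            by_cases hmem : h' ∈ s
            · simp [Set.indicator_of_mem hmem]
            · simp [Set.indicator_of_notMem hmem]

lemma stepLaw_le (ρ0 ρ1 : Mat ι) (hfs0 : ρ0.PosDef) (hfs1 : ρ1.PosDef) {N : ℕ}
    (μ : (k : ℕ) → Kernel (Hist ι N k) (POVM ι N)) (hμ : ∀ k, IsMarkovKernel (μ k)) (k : ℕ)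
    {C : Set (Hist ι N k)} (hC : MeasurableSet C) (c : ℝ)
    (hsub : ∀ h ∈ C, ∑ i, Zfun ρ0 ρ1 (h i) ≤ c) :
    stepLaw ρ0 μ k C ≤ ENNReal.ofReal (Real.exp c) * stepLaw ρ1 μ k C := by
  rw [stepLaw_withDensity ρ0 ρ1 hfs0 hfs1 μ hμ k, withDensity_apply _ hC]
  calc ∫⁻ h in C, densFn ρ0 ρ1 N k h ∂(stepLaw ρ1 μ k)
      ≤ ∫⁻ _h in C, ENNReal.ofReal (Real.exp c) ∂(stepLaw ρ1 μ k) := by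
        refine setLIntegral_mono measurable_const fun h hh => ?_
        exact ENNReal.ofReal_le_ofReal (Real.exp_le_exp.mpr (hsub h hh))
    _ = ENNReal.ofReal (Real.exp c) * stepLaw ρ1 μ k C := setLIntegral_const _ _

lemma Zfun_swap (ρ0 ρ1 : Mat ι) {N : ℕ} (p : POVM ι N × Fin N) :
    Zfun ρ1 ρ0 p = - Zfun ρ0 ρ1 p := by
  simp [Zfun]

end Aux3

section Aux4

variable {ι : Type} [Fintype ι] [DecidableEq ι]

/-- Truncation of a history. -/
def trunc {N j k : ℕ} (hle : j ≤ k) (h : Hist ι N k) : Hist ι N j :=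
  fun i => h (Fin.castLE hle i)

lemma measurable_trunc {N j k : ℕ} (hle : j ≤ k) :
    Measurable (trunc (ι := ι) (N := N) hle) :=
  measurable_pi_lambda _ fun i => measurable_pi_apply _

lemma measurable_pref {N : ℕ} (k : ℕ) : Measurable (pref (ι := ι) (N := N) k) :=
  measurable_pi_lambda _ fun i => measurable_pi_apply _

/-- The event (on histories of length `k+1`) that the test stops for the first
time after `k+1` observations and declares `b`. -/
def Ck (S : SQHTtest ι) (b : Bool) (k : ℕ) : Set (Hist ι S.N (k+1)) :=
  {h | (∀ j, ∀ hj : j < k, S.dec j (trunc (Nat.succ_le_succ hj.le) h) = none)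
    ∧ S.dec k h = some b}

lemma measurable_Ck (S : SQHTtest ι) (b : Bool) (k : ℕ) : MeasurableSet (Ck S b k) := by
  have heq : Ck S b k =
      (⋂ j, ⋂ hj : j < k,
        trunc (Nat.succ_le_succ (le_of_lt hj)) ⁻¹' {h' | S.dec j h' = none})
      ∩ {h | S.dec k h = some b} := by
    ext h
    simp [Ck, Set.mem_iInter]
  rw [heq]
  exact (MeasurableSet.iInter fun j => MeasurableSet.iInter fun hj =>
    (measurable_trunc _) (S.dec_meas j none)).inter (S.dec_meas k (some b))

lemma mem_Ek_iff (S : SQHTtest ι) (ω : Traj ι S.N) (k : ℕ) (b : Bool) :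
    ω ∈ pref (k+1) ⁻¹' Ck S b k ↔ decidesAt S ω k b := Iff.rfl

lemma errSet_eq (S : SQHTtest ι) (b : Bool) :
    {ω : Traj ι S.N | ∃ k, decidesAt S ω k b} = ⋃ k, pref (k+1) ⁻¹' Ck S b k := by
  ext ω
  simp only [Set.mem_setOf_eq, Set.mem_iUnion]
  exact exists_congr fun k => (mem_Ek_iff S ω k b).symm

lemma Ek_disjoint (S : SQHTtest ι) (b : Bool) :
    Pairwise (Function.onFun Disjoint
      (fun k : ℕ => (pref (k+1) ⁻¹' Ck S b k : Set (Traj ι S.N)))) := by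
  have key : ∀ k k', k < k' → ∀ ω : Traj ι S.N,
      ω ∈ pref (k+1) ⁻¹' Ck S b k → ω ∉ pref (k'+1) ⁻¹' Ck S b k' := by
    intro k k' hkk' ω hω hω'
    have h1 : S.dec k (pref (k+1) ω) = some b := ((mem_Ek_iff S ω k b).mp hω).2
    have h2 : S.dec k (pref (k+1) ω) = none := ((mem_Ek_iff S ω k' b).mp hω').1 k hkk'
    rw [h1] at h2
    exact Option.some_ne_none _ h2
  intro k k' hne
  rcases lt_or_gt_of_ne hne with h | h
  · exact Set.disjoint_left.mpr fun ω hω hω' => key k k' h ω hω hω'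
  · exact Set.disjoint_right.mpr fun ω hω hω' => key k' k h ω hω hω'

lemma key_bound (ρ σ : Mat ι) (hρ : ρ.PosDef) (hσ : σ.PosDef)
    (S : SQHTtest ι) (b : Bool) (P Q : Measure (Traj ι S.N))
    (hP : IsLaw ρ S P) (hQ : IsLaw σ S Q) (c : ℝ)
    (hsub : ∀ k, ∀ h ∈ Ck S b k, ∑ i, Zfun ρ σ (h i) ≤ c) :
    P {ω | ∃ k, decidesAt S ω k b} ≤ ENNReal.ofReal (Real.exp c) := by
  have hlaw : ∀ (τ : Mat ι) (R : Measure (Traj ι S.N)), IsLaw τ S R → ∀ k,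
      R (pref (k+1) ⁻¹' Ck S b k) = stepLaw τ S.μ (k+1) (Ck S b k) := by
    intro τ R hR k
    rw [← hR.2 (k+1), Measure.map_apply (measurable_pref _) (measurable_Ck S b k)]
  have hmeasE : ∀ k : ℕ, MeasurableSet (pref (k+1) ⁻¹' Ck S b k : Set (Traj ι S.N)) :=
    fun k => (measurable_pref _) (measurable_Ck S b k)
  rw [errSet_eq, measure_iUnion (Ek_disjoint S b) hmeasE]
  haveI := hQ.1
  calc ∑' k, P (pref (k+1) ⁻¹' Ck S b k)
      ≤ ∑' k, ENNReal.ofReal (Real.exp c) * Q (pref (k+1) ⁻¹' Ck S b k) := by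
        refine ENNReal.tsum_le_tsum fun k => ?_
        rw [hlaw ρ P hP k, hlaw σ Q hQ k]
        exact stepLaw_le ρ σ hρ hσ S.μ S.markov (k+1) (measurable_Ck S b k) c (hsub k)
    _ = ENNReal.ofReal (Real.exp c) * Q (⋃ k, pref (k+1) ⁻¹' Ck S b k) := by
        rw [ENNReal.tsum_mul_left, measure_iUnion (Ek_disjoint S b) hmeasE]
    _ ≤ ENNReal.ofReal (Real.exp c) * 1 :=
        mul_le_mul_right (prob_le_one) _
    _ = ENNReal.ofReal (Real.exp c) := mul_one _

lemma Sfun_eq (ρ0 ρ1 : Mat ι) {N : ℕ} (k : ℕ) (ω : Traj ι N) :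
    Sfun ρ0 ρ1 k ω = ∑ i, Zfun ρ0 ρ1 (pref k ω i) :=
  (Fin.sum_univ_eq_sum_range (fun j => Zfun ρ0 ρ1 (ω j)) k).symm

end Aux4

/-- for an SQPRT with parameters `A, B > 0` whose stopping time is
a.s. finite under both hypotheses, `α = P_0(S_T ≤ −A) ≤ e^{−A}` and
`β = P_1(S_T ≥ B) ≤ e^{−B}`. -/
theorem sqprt_error_bounds
    (d : ℕ) (hd : 0 < d) (ρ0 ρ1 : Mat (Fin d))
    (h0 : IsState ρ0) (h1 : IsState ρ1)
    (hfs0 : ρ0.PosDef) (hfs1 : ρ1.PosDef)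
    (S : SQHTtest (Fin d)) (A B : ℝ) (hA : 0 < A) (hB : 0 < B)
    (hsprt : IsSQPRT ρ0 ρ1 S A B)
    (P0 P1 : Measure (Traj (Fin d) S.N))
    (hP0 : IsLaw ρ0 S P0) (hP1 : IsLaw ρ1 S P1)
    (hfin0 : P0 {ω | ∀ k, S.dec k (pref (k + 1) ω) = none} = 0)
    (hfin1 : P1 {ω | ∀ k, S.dec k (pref (k + 1) ω) = none} = 0) :
    (errA S P0 = P0 {ω | ∃ k, (∀ j, j < k → S.dec j (pref (j + 1) ω) = none) ∧
        S.dec k (pref (k + 1) ω) ≠ none ∧ Sfun ρ0 ρ1 (k + 1) ω ≤ -A} ∧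
      errA S P0 ≤ ENNReal.ofReal (Real.exp (-A))) ∧
    (errB S P1 = P1 {ω | ∃ k, (∀ j, j < k → S.dec j (pref (j + 1) ω) = none) ∧
        S.dec k (pref (k + 1) ω) ≠ none ∧ B ≤ Sfun ρ0 ρ1 (k + 1) ω} ∧
      errB S P1 ≤ ENNReal.ofReal (Real.exp (-B))) := by
  have hAB : -A < B := by linarith
  have hdecA : ∀ (k : ℕ) (h : Hist (Fin d) S.N (k+1)),
      S.dec k h = some true ↔
        (S.dec k h ≠ none ∧ ∑ i, Zfun ρ0 ρ1 (h i) ≤ -A) := by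
    intro k h
    rw [hsprt k h]
    split_ifs with h1' h2'
    · constructor
      · intro hc; simp at hc
      · rintro ⟨-, hle⟩; exfalso; linarith
    · simp [h2']
    · simp [h2']
  have hdecB : ∀ (k : ℕ) (h : Hist (Fin d) S.N (k+1)),
      S.dec k h = some false ↔
        (S.dec k h ≠ none ∧ B ≤ ∑ i, Zfun ρ0 ρ1 (h i)) := by
    intro k h
    rw [hsprt k h]
    split_ifs with h1' h2'
    · simp [h1']
    · simp [h1']
    · simp [h1']
  have hsetA : {ω : Traj (Fin d) S.N | ∃ k, decidesAt S ω k true}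
      = {ω | ∃ k, (∀ j, j < k → S.dec j (pref (j + 1) ω) = none) ∧
          S.dec k (pref (k + 1) ω) ≠ none ∧ Sfun ρ0 ρ1 (k + 1) ω ≤ -A} := by
    ext ω
    simp only [Set.mem_setOf_eq]
    refine exists_congr fun k => ?_
    rw [Sfun_eq]
    unfold decidesAt
    rw [hdecA k (pref (k+1) ω)]
  have hsetB : {ω : Traj (Fin d) S.N | ∃ k, decidesAt S ω k false}
      = {ω | ∃ k, (∀ j, j < k → S.dec j (pref (j + 1) ω) = none) ∧
          S.dec k (pref (k + 1) ω) ≠ none ∧ B ≤ Sfun ρ0 ρ1 (k + 1) ω} := by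
    ext ω
    simp only [Set.mem_setOf_eq]
    refine exists_congr fun k => ?_
    rw [Sfun_eq]
    unfold decidesAt
    rw [hdecB k (pref (k+1) ω)]
  have hboundA : errA S P0 ≤ ENNReal.ofReal (Real.exp (-A)) := by
    refine key_bound ρ0 ρ1 hfs0 hfs1 S true P0 P1 hP0 hP1 (-A) ?_
    intro k h hh
    exact ((hdecA k h).mp hh.2).2
  have hboundB : errB S P1 ≤ ENNReal.ofReal (Real.exp (-B)) := by
    refine key_bound ρ1 ρ0 hfs1 hfs0 S false P1 P0 hP1 hP0 (-B) ?_
    intro k h hh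
    have hB' := ((hdecB k h).mp hh.2).2
    have hneg : ∑ i, Zfun ρ1 ρ0 (h i) = -∑ i, Zfun ρ0 ρ1 (h i) := by
      simp only [Zfun_swap ρ0 ρ1]
      exact Finset.sum_neg_distrib (f := fun i => Zfun ρ0 ρ1 (h i))
    rw [hneg]
    linarith
  exact ⟨⟨congrArg P0 hsetA, hboundA⟩, ⟨congrArg P1 hsetB, hboundB⟩⟩

end SQHT
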